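/- For n ≥ 1 and k ∈ GL₂(O_F), the pair (Bk, B(0 1;1 0)k) in (B\G)² lies in the image (under Tg ↦ (Bg, Bwg)) of the I_n-orbit of the identity coset in T\G if and only if k ∈ I_n. Moreover for arbitrary k, k' ∈ K with k' ∉ Bk, the pair (Bk, Bk') lies in that image if and only if k ∈ I_n and k' ∉ I_1. -/

import Mathlib

open Matrix

noncomputable section

/-- `GL₂(O_F)` viewed as a set of matrices over `F`. -/
def Kset {F : Type*} [Field F] (O : ValuationSubring F) : Set (Matrix (Fin 2) (Fin 2) F) :=
  {g | (∀ i j, g i j ∈ O) ∧ ∃ u ∈ O, g.det * u = 1}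

/-- The congruence subgroup `I_n ⊂ GL₂(O_F)`. -/
def Iset {F : Type*} [Field F] (O : ValuationSubring F) (ϖ : F) (n : ℕ) :
    Set (Matrix (Fin 2) (Fin 2) F) :=
  {g | g ∈ Kset O ∧ ∃ r ∈ O, g 1 0 = ϖ ^ n * r}

/-- The upper triangular Borel subgroup `B ⊂ GL₂(F)`, as a set of matrices. -/
def Bset (F : Type*) [Field F] : Set (Matrix (Fin 2) (Fin 2) F) :=
  {g | g 1 0 = 0 ∧ g.det ≠ 0}


private theorem st17_pi_not_unit {F : Type*} [Field F] (O : ValuationSubring F) (ϖ : F)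
    (hϖ : ϖ ∈ O) (hirr : Irreducible (⟨ϖ, hϖ⟩ : O)) : ¬ ∃ c ∈ O, ϖ * c = 1 := by
  rintro ⟨c, hc, h⟩
  exact hirr.not_isUnit (IsUnit.of_mul_eq_one (a := ⟨ϖ, hϖ⟩) ⟨c, hc⟩ (Subtype.ext (by simpa using h)))

private theorem st17_nonunit_dvd {F : Type*} [Field F] (O : ValuationSubring F) (ϖ : F)
    (hϖ : ϖ ∈ O) (hirr : Irreducible (⟨ϖ, hϖ⟩ : O)) (x : F) (hx : x ∈ O)
    (h : ¬ ∃ u ∈ O, x * u = 1) : ∃ r ∈ O, x = ϖ * r := by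
  by_cases hx0 : x = 0
  · exact ⟨0, O.zero_mem, by simp [hx0]⟩
  have hϖ0 : ϖ ≠ 0 := by
    rintro rfl
    exact hirr.ne_zero (Subtype.ext rfl)
  rcases O.mem_or_inv_mem (x * ϖ⁻¹) with hm | hm
  · exact ⟨x * ϖ⁻¹, hm, by field_simp⟩
  · have hm' : ϖ * x⁻¹ ∈ O := by
      have he : (x * ϖ⁻¹)⁻¹ = ϖ * x⁻¹ := by
        rw [mul_inv, inv_inv, mul_comm]
      rwa [he] at hm
    have hfac : (⟨ϖ, hϖ⟩ : O) = ⟨x, hx⟩ * ⟨ϖ * x⁻¹, hm'⟩ := by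
      ext; simp; field_simp
    rcases hirr.isUnit_or_isUnit hfac with hu | hu
    · rcases hu.exists_right_inv with ⟨b, hb⟩
      have hb' : x * b.1 = 1 := by
        have := congrArg Subtype.val hb
        simpa using this
      exact absurd ⟨b.1, b.2, hb'⟩ h
    · rcases hu.exists_right_inv with ⟨b, hb⟩
      have hb' : ϖ * x⁻¹ * b.1 = 1 := by
        have := congrArg Subtype.val hb
        simpa using this
      have : x = ϖ * b.1 := by field_simp at hb'; linear_combination -hb'
      exact ⟨b.1, b.2, this⟩

private theorem st17_unit_sub_pi {F : Type*} [Field F] (O : ValuationSubring F) (ϖ : F)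
    (hϖ : ϖ ∈ O) (hirr : Irreducible (⟨ϖ, hϖ⟩ : O)) (a s a' : F) (ha : a ∈ O) (hs : s ∈ O)
    (ha' : a' ∈ O) (h1 : a * a' = 1) : ∃ w ∈ O, (a - ϖ * s) * w = 1 := by
  by_cases h : ∃ u ∈ O, (a - ϖ * s) * u = 1
  · exact h
  · rcases st17_nonunit_dvd O ϖ hϖ hirr _ (sub_mem ha (mul_mem hϖ hs)) h with ⟨t, ht, hts⟩
    exact absurd ⟨(s + t) * a', mul_mem (add_mem hs ht) ha',
        by linear_combination h1 - a' * hts⟩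
      (st17_pi_not_unit O ϖ hϖ hirr)

private theorem st17_diag_unit {F : Type*} [Field F] (O : ValuationSubring F) (ϖ : F)
    (hϖ : ϖ ∈ O) (hirr : Irreducible (⟨ϖ, hϖ⟩ : O)) (n : ℕ) (hn : 1 ≤ n)
    (κ : Matrix (Fin 2) (Fin 2) F) (hκ : κ ∈ Iset O ϖ n) :
    (∃ v ∈ O, κ 0 0 * v = 1) ∧ (∃ v ∈ O, κ 1 1 * v = 1) := by
  obtain ⟨⟨hmem, u, hu, hdet⟩, r, hr, h10⟩ := hκ
  rw [Matrix.det_fin_two] at hdet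
  have hpow : ϖ ^ n = ϖ * ϖ ^ (n - 1) := by
    conv_lhs => rw [show n = 1 + (n - 1) by omega]
    rw [pow_add, pow_one]
  have key : κ 0 0 * κ 1 1 * u = 1 - ϖ * (-(ϖ ^ (n-1) * κ 0 1 * r * u)) := by
    linear_combination hdet + u * κ 0 1 * h10 + u * κ 0 1 * r * hpow
  have hsm : -(ϖ ^ (n-1) * κ 0 1 * r * u) ∈ O :=
    neg_mem (mul_mem (mul_mem (mul_mem (pow_mem hϖ _) (hmem 0 1)) hr) hu)
  have h1O : (1:F) ∈ O := O.one_mem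
  rcases st17_unit_sub_pi O ϖ hϖ hirr 1 (-(ϖ ^ (n-1) * κ 0 1 * r * u)) 1 h1O hsm h1O (one_mul 1)
    with ⟨w, hw, hww⟩
  rw [← key] at hww
  constructor
  · exact ⟨κ 1 1 * u * w, mul_mem (mul_mem (hmem 1 1) hu) hw, by linear_combination hww⟩
  · exact ⟨κ 0 0 * u * w, mul_mem (mul_mem (hmem 0 0) hu) hw, by linear_combination hww⟩

private theorem st17_mem_In_of {F : Type*} [Field F] (O : ValuationSubring F) (ϖ : F)
    (hϖ : ϖ ∈ O) (hirr : Irreducible (⟨ϖ, hϖ⟩ : O)) (n : ℕ) (hn : 1 ≤ n)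
    (k κ b : Matrix (Fin 2) (Fin 2) F) (hk : k ∈ Kset O) (hκ : κ ∈ Iset O ϖ n)
    (hb : b ∈ Bset F) (heq : k = b * κ) : k ∈ Iset O ϖ n := by
  obtain ⟨-, v, hv, hvv⟩ := st17_diag_unit O ϖ hϖ hirr n hn κ hκ
  obtain ⟨-, r, hr, hκ10⟩ := hκ
  have e10 := congrFun (congrFun heq 1) 0
  have e11 := congrFun (congrFun heq 1) 1
  simp [Matrix.mul_apply, Fin.sum_univ_two, hb.1] at e10 e11
  have hb11 : b 1 1 = k 1 1 * v := by linear_combination -b 1 1 * hvv - v * e11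
  refine ⟨hk, k 1 1 * v * r, mul_mem (mul_mem (hk.1 1 1) hv) hr, ?_⟩
  linear_combination e10 + b 1 1 * hκ10 + ϖ ^ n * r * hb11

private theorem st17_not_I1 {F : Type*} [Field F] (O : ValuationSubring F) (ϖ : F)
    (hϖ : ϖ ∈ O) (hirr : Irreducible (⟨ϖ, hϖ⟩ : O)) (n : ℕ) (hn : 1 ≤ n)
    (k' κ b' : Matrix (Fin 2) (Fin 2) F) (hk' : k' ∈ Kset O) (hκ : κ ∈ Iset O ϖ n)
    (hb' : b' ∈ Bset F) (heq : k' = b' * (!![0, 1; 1, 0] * κ)) : k' ∉ Iset O ϖ 1 := by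
  rintro ⟨-, r', hr', h10'⟩
  rw [pow_one] at h10'
  obtain ⟨⟨hκm, u, hu, hdetκ⟩, r, hr, hκ10⟩ := hκ
  rw [Matrix.det_fin_two] at hdetκ
  obtain ⟨⟨v0, hv0, hv0v⟩, -⟩ := st17_diag_unit O ϖ hϖ hirr n hn κ
    ⟨⟨hκm, u, hu, by rw [Matrix.det_fin_two]; exact hdetκ⟩, r, hr, hκ10⟩
  obtain ⟨hk'm, u', hu', hdet'⟩ := hk'
  rw [Matrix.det_fin_two] at hdet'
  have hwκ : (!![(0:F), 1; 1, 0] * κ) = !![κ 1 0, κ 1 1; κ 0 0, κ 0 1] := by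
    ext i j; fin_cases i <;> fin_cases j <;> simp [Matrix.mul_apply, Fin.sum_univ_two]
  rw [hwκ] at heq
  have e00 := congrFun (congrFun heq 0) 0
  have e01 := congrFun (congrFun heq 0) 1
  have e10 := congrFun (congrFun heq 1) 0
  have e11 := congrFun (congrFun heq 1) 1
  simp [Matrix.mul_apply, Fin.sum_univ_two, hb'.1] at e00 e01 e10 e11
  have hb11 : b' 1 1 = ϖ * (r' * v0) := by
    linear_combination -b' 1 1 * hv0v - v0 * e10 + v0 * h10'
  have hb00 : b' 0 0 * (κ 0 0 * κ 1 1 - κ 0 1 * κ 1 0) = k' 0 1 * κ 0 0 - k' 0 0 * κ 0 1 := by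
    linear_combination κ 0 1 * e00 - κ 0 0 * e01
  have hdk' : k' 0 0 * k' 1 1 - k' 0 1 * k' 1 0
      = b' 0 0 * b' 1 1 * (κ 1 0 * κ 0 1 - κ 1 1 * κ 0 0) := by
    linear_combination k' 1 1 * e00 + (b' 0 0 * κ 1 0 + b' 0 1 * κ 0 0) * e11
      - k' 1 0 * e01 - (b' 0 0 * κ 1 1 + b' 0 1 * κ 0 1) * e10
  have step1 : b' 0 0 * b' 1 1 * (κ 1 0 * κ 0 1 - κ 1 1 * κ 0 0) * u' = 1 := by
    linear_combination hdet' - u' * hdk'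
  refine st17_pi_not_unit O ϖ hϖ hirr ⟨(k' 0 1 * κ 0 0 - k' 0 0 * κ 0 1) * u * (r' * v0) *
      (κ 1 0 * κ 0 1 - κ 1 1 * κ 0 0) * u', ?_, ?_⟩
  · exact mul_mem (mul_mem (mul_mem (mul_mem
      (sub_mem (mul_mem (hk'm 0 1) (hκm 0 0)) (mul_mem (hk'm 0 0) (hκm 0 1))) hu)
      (mul_mem hr' hv0)) (sub_mem (mul_mem (hκm 1 0) (hκm 0 1)) (mul_mem (hκm 1 1) (hκm 0 0)))) hu'
  · linear_combination
      -((k' 0 1 * κ 0 0 - k' 0 0 * κ 0 1) * u * (κ 1 0 * κ 0 1 - κ 1 1 * κ 0 0) * u') * hb11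
      - (u * b' 1 1 * (κ 1 0 * κ 0 1 - κ 1 1 * κ 0 0) * u') * hb00
      + (b' 0 0 * b' 1 1 * (κ 1 0 * κ 0 1 - κ 1 1 * κ 0 0) * u') * hdetκ
      + step1

private theorem st17_construct {F : Type*} [Field F] (O : ValuationSubring F) (ϖ : F)
    (hϖ : ϖ ∈ O) (hirr : Irreducible (⟨ϖ, hϖ⟩ : O)) (n : ℕ) (hn : 1 ≤ n)
    (k k' : Matrix (Fin 2) (Fin 2) F) (hkI : k ∈ Iset O ϖ n) (hk' : k' ∈ Kset O)
    (hk'I : k' ∉ Iset O ϖ 1) :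
    ∃ κ ∈ Iset O ϖ n, (∃ b ∈ Bset F, k = b * κ) ∧
      (∃ b ∈ Bset F, k' = b * (!![0, 1; 1, 0] * κ)) := by
  have hdu := st17_diag_unit O ϖ hϖ hirr n hn k hkI
  obtain ⟨⟨hkm, u, hu, hdetk⟩, r, hr, hk10⟩ := hkI
  obtain ⟨-, v1, hv1, hv1v⟩ := hdu
  obtain ⟨hk'm, u', hu', hdet'⟩ := hk'
  rw [Matrix.det_fin_two] at hdetk hdet'
  have hpow : ϖ ^ n = ϖ * ϖ ^ (n - 1) := by
    conv_lhs => rw [show n = 1 + (n - 1) by omega]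
    rw [pow_add, pow_one]
  obtain ⟨c, hcO, hcc⟩ : ∃ c ∈ O, k' 1 0 * c = 1 := by
    by_contra h
    rcases st17_nonunit_dvd O ϖ hϖ hirr _ (hk'm 1 0) h with ⟨r', hr', he⟩
    exact hk'I ⟨⟨hk'm, u', hu', by rw [Matrix.det_fin_two]; exact hdet'⟩, r', hr',
      by rw [pow_one]; exact he⟩
  have h1 : (k' 1 0 * k 1 1) * (c * v1) = 1 := by
    linear_combination k 1 1 * v1 * hcc + hv1v
  obtain ⟨w0, hw0, hw0w⟩ := st17_unit_sub_pi O ϖ hϖ hirr (k' 1 0 * k 1 1)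
    (ϖ ^ (n - 1) * k' 1 1 * r) (c * v1) (mul_mem (hk'm 1 0) (hkm 1 1))
    (mul_mem (mul_mem (pow_mem hϖ _) (hk'm 1 1)) hr) (mul_mem hcO hv1) h1
  have hD : (k' 1 0 * k 1 1 - k' 1 1 * k 1 0) * w0 = 1 := by
    linear_combination hw0w - w0 * k' 1 1 * hk10 - w0 * k' 1 1 * r * hpow
  set m10 : F := (k' 1 0 * k 1 1 - k' 1 1 * k 1 0) * u with hm10
  set m11 : F := (k' 1 1 * k 0 0 - k' 1 0 * k 0 1) * u with hm11
  have hm10O : m10 ∈ O :=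
    mul_mem (sub_mem (mul_mem (hk'm 1 0) (hkm 1 1)) (mul_mem (hk'm 1 1) (hkm 1 0))) hu
  have hm11O : m11 ∈ O :=
    mul_mem (sub_mem (mul_mem (hk'm 1 1) (hkm 0 0)) (mul_mem (hk'm 1 0) (hkm 0 1))) hu
  set κ : Matrix (Fin 2) (Fin 2) F :=
    !![m10 * k 0 0 + m11 * k 1 0, m10 * k 0 1 + m11 * k 1 1; k 1 0, k 1 1] with hκdef
  set wm : F := (k 0 0 * k 1 1 - k 0 1 * k 1 0) * w0 with hwmdef
  have hwmO : wm ∈ O :=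
    mul_mem (sub_mem (mul_mem (hkm 0 0) (hkm 1 1)) (mul_mem (hkm 0 1) (hkm 1 0))) hw0
  have hwm : m10 * wm = 1 := by
    linear_combination m10 * hwmdef + (k 0 0 * k 1 1 - k 0 1 * k 1 0) * w0 * hm10
      + u * (k 0 0 * k 1 1 - k 0 1 * k 1 0) * hD + hdetk
  set d : F := -(k' 0 0 * k' 1 1 - k' 0 1 * k' 1 0) * w0 with hd
  set e : F := -(k 1 0 * k' 0 1 - k 1 1 * k' 0 0) * w0 with he
  have hdinv : d * (-(k' 1 0 * k 1 1 - k' 1 1 * k 1 0) * u') = 1 := by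
    linear_combination -(k' 1 0 * k 1 1 - k' 1 1 * k 1 0) * u' * hd
      + (k' 0 0 * k' 1 1 - k' 0 1 * k' 1 0) * u' * hD + hdet'
  refine ⟨κ, ⟨⟨?_, w0, hw0, ?_⟩, r, hr, ?_⟩, ?_, ?_⟩
  · intro i j
    fin_cases i <;> fin_cases j <;> simp [hκdef]
    · exact add_mem (mul_mem hm10O (hkm 0 0)) (mul_mem hm11O (hkm 1 0))
    · exact add_mem (mul_mem hm10O (hkm 0 1)) (mul_mem hm11O (hkm 1 1))
    · exact hkm 1 0
    · exact hkm 1 1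
  · rw [hκdef, Matrix.det_fin_two_of]
    linear_combination (k 0 0 * k 1 1 - k 0 1 * k 1 0) * w0 * hm10
      + u * (k 0 0 * k 1 1 - k 0 1 * k 1 0) * hD + hdetk
  · simp [hκdef]; exact hk10
  · refine ⟨!![wm, -(wm * m11); 0, 1], ⟨by simp, ?_⟩, ?_⟩
    · rw [Matrix.det_fin_two_of]
      intro h0
      rw [show wm * 1 - -(wm * m11) * 0 = wm by ring] at h0
      rw [h0, mul_zero] at hwm
      exact zero_ne_one hwm
    · ext i j
      fin_cases i <;> fin_cases j <;>
        simp [hκdef, Matrix.mul_apply, Fin.sum_univ_two]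
      · linear_combination -k 0 0 * hwm
      · linear_combination -k 0 1 * hwm
  · have hwκ : (!![(0:F), 1; 1, 0] * κ) = !![κ 1 0, κ 1 1; κ 0 0, κ 0 1] := by
      ext i j; fin_cases i <;> fin_cases j <;> simp [Matrix.mul_apply, Fin.sum_univ_two]
    refine ⟨!![d, e; 0, 1], ⟨by simp, ?_⟩, ?_⟩
    · rw [Matrix.det_fin_two_of]
      intro h0
      rw [show d * 1 - e * 0 = d by ring] at h0
      rw [h0, zero_mul] at hdinv
      exact zero_ne_one hdinv
    · rw [hwκ]
      ext i j
      fin_cases i <;> fin_cases j <;>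
        simp [hκdef, Matrix.mul_apply, Fin.sum_univ_two]
      · linear_combination -e * k 0 0 * hm10 - e * k 1 0 * hm11 - e * k' 1 0 * hdetk
          - k 1 0 * hd - k' 1 0 * he - k' 0 0 * hD
      · linear_combination -e * k 0 1 * hm10 - e * k 1 1 * hm11 - e * k' 1 1 * hdetk
          - k 1 1 * hd - k' 1 1 * he - k' 0 1 * hD
      · linear_combination -k 0 0 * hm10 - k 1 0 * hm11 - k' 1 0 * hdetk
      · linear_combination -k 0 1 * hm10 - k 1 1 * hm11 - k' 1 1 * hdetk

/-- under the identification `Tg ↦ (Bg, Bwg)` of `T\G` with the complement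
of the diagonal in `B\G × B\G`, for `k ∈ K` the pair `(Bk, Bwk)` lies in the image of the
`I_n`-orbit of the identity coset iff `k ∈ I_n`; and for `k, k' ∈ K` with `k' ∉ Bk`, the
pair `(Bk, Bk')` lies in that image iff `k ∈ I_n` and `k' ∉ I_1`. -/
theorem statement17 {F : Type*} [Field F] (O : ValuationSubring F) (ϖ : F) (hϖ : ϖ ∈ O)
    (hirr : Irreducible (⟨ϖ, hϖ⟩ : O)) (n : ℕ) (hn : 1 ≤ n) :
    (∀ k ∈ Kset O,
      ((∃ κ ∈ Iset O ϖ n, (∃ b ∈ Bset F, k = b * κ) ∧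
          (∃ b ∈ Bset F, !![0, 1; 1, 0] * k = b * (!![0, 1; 1, 0] * κ)))
        ↔ k ∈ Iset O ϖ n)) ∧
    (∀ k ∈ Kset O, ∀ k' ∈ Kset O, (¬ ∃ b ∈ Bset F, k' = b * k) →
      ((∃ κ ∈ Iset O ϖ n, (∃ b ∈ Bset F, k = b * κ) ∧
          (∃ b ∈ Bset F, k' = b * (!![0, 1; 1, 0] * κ)))
        ↔ (k ∈ Iset O ϖ n ∧ k' ∉ Iset O ϖ 1))) := by
  constructor
  · intro k hk
    constructor
    · rintro ⟨κ, hκ, ⟨b, hb, hkb⟩, -⟩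
      exact st17_mem_In_of O ϖ hϖ hirr n hn k κ b hk hκ hb hkb
    · intro hkI
      have h1B : (1 : Matrix (Fin 2) (Fin 2) F) ∈ Bset F := ⟨by simp [Matrix.one_apply], by simp⟩
      exact ⟨k, hkI, ⟨1, h1B, (one_mul k).symm⟩, ⟨1, h1B, (one_mul _).symm⟩⟩
  · intro k hk k' hk' _
    constructor
    · rintro ⟨κ, hκ, ⟨b, hb, hkb⟩, b', hb', hk'b⟩
      exact ⟨st17_mem_In_of O ϖ hϖ hirr n hn k κ b hk hκ hb hkb,
        st17_not_I1 O ϖ hϖ hirr n hn k' κ b' hk' hκ hb' hk'b⟩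
    · rintro ⟨hkI, hk'I⟩
      exact st17_construct O ϖ hϖ hirr n hn k k' hkI hk' hk'I
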